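/- Let 0 ≤ α < 1 and β > 0. Define p(r) = ∫₀^r e^{-βs} (r-s)^{-α} s^{-α} ds for r > 0. Then there exists a constant c > 0 (depending only on α and β) such that p(r) ≤ c · r^{-α} for all r > 0. -/

import Mathlib

open MeasureTheory Set

theorem stmt0 (α β : ℝ) (hα0 : 0 ≤ α) (hα1 : α < 1) (hβ : 0 < β) :
    ∃ c > 0, ∀ r > 0,
      (∫ s in (0:ℝ)..r, Real.exp (-β * s) * (r - s) ^ (-α) * s ^ (-α)) ≤ c * r ^ (-α) := by
  have h1α : (0:ℝ) < 1 - α := by linarith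
  have hΓ : 0 < Real.Gamma (1 - α) := Real.Gamma_pos_of_pos h1α
  set A : ℝ := (1/β) ^ (1-α) * Real.Gamma (1-α) with hA
  set B : ℝ := (1 + 1/β) / (1-α) with hB
  have hApos : 0 < A := by positivity
  have hBpos : 0 < B := by positivity
  refine ⟨(2:ℝ) ^ α * (A + B), by positivity, fun r hr => ?_⟩
  have hr2 : (0:ℝ) < r/2 := by linarith
  set f : ℝ → ℝ := fun s => Real.exp (-β * s) * (r - s) ^ (-α) * s ^ (-α) with hf
  have hfmeas : Measurable f := by fun_prop
  have hfnonneg : ∀ s ∈ Icc (0:ℝ) r, 0 ≤ f s := fun s hs => by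
    have h1 : (0:ℝ) ≤ r - s := by linarith [hs.2]
    exact mul_nonneg (mul_nonneg (Real.exp_pos _).le (Real.rpow_nonneg h1 _))
      (Real.rpow_nonneg hs.1 _)
  -- integrability of exp(-βs) s^(-α) on Ioi 0 and its integral value
  have hg0 : IntegrableOn (fun s => Real.exp (-β*s) * s^(-α)) (Ioi (0:ℝ)) := by
    have h := integrableOn_rpow_mul_exp_neg_mul_rpow (p := 1) (s := -α) (b := β)
      (by linarith) one_pos hβ
    refine h.congr_fun (fun x hx => ?_) measurableSet_Ioi
    simp only [Real.rpow_one]; ring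
  have hg0val : ∫ s in Ioi (0:ℝ), Real.exp (-β*s) * s^(-α) = A := by
    have h := Real.integral_rpow_mul_exp_neg_mul_Ioi h1α hβ
    rw [hA, ← h]
    refine setIntegral_congr_fun measurableSet_Ioi (fun x hx => ?_)
    rw [show (1:ℝ)-α-1 = -α by ring, neg_mul]; ring
  -- the dominating functions
  set g1 : ℝ → ℝ := fun s => (r/2)^(-α) * (Real.exp (-β*s) * s^(-α)) with hg1
  set C2 : ℝ := Real.exp (-β*(r/2)) * (r/2)^(-α) with hC2
  set g2 : ℝ → ℝ := fun s => C2 * (r - s)^(-α) with hg2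
  have hC2pos : 0 < C2 := by positivity
  -- integrability of g1 on [0, r/2] and f ≤ g1 there
  have hintg1 : IntervalIntegrable g1 volume 0 (r/2) := by
    refine IntervalIntegrable.const_mul ?_ _
    rw [intervalIntegrable_iff_integrableOn_Ioc_of_le hr2.le]
    exact hg0.mono_set Ioc_subset_Ioi_self
  have hle1 : ∀ s ∈ Icc (0:ℝ) (r/2), f s ≤ g1 s := by
    intro s hs
    have hrs : r/2 ≤ r - s := by linarith [hs.2]
    have h1 : (r - s)^(-α) ≤ (r/2)^(-α) :=
      Real.rpow_le_rpow_of_nonpos hr2 hrs (by linarith)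
    have h2 : 0 ≤ Real.exp (-β*s) * s^(-α) :=
      mul_nonneg (Real.exp_pos _).le (Real.rpow_nonneg hs.1 _)
    calc f s = (r - s)^(-α) * (Real.exp (-β*s) * s^(-α)) := by rw [hf]; ring
      _ ≤ (r/2)^(-α) * (Real.exp (-β*s) * s^(-α)) := mul_le_mul_of_nonneg_right h1 h2
  have hintf1 : IntervalIntegrable f volume 0 (r/2) := by
    refine hintg1.mono_fun' hfmeas.aestronglyMeasurable.restrict ?_
    rw [uIoc_of_le hr2.le]
    filter_upwards [ae_restrict_mem measurableSet_Ioc] with x hx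
    rw [Real.norm_eq_abs, abs_of_nonneg (hfnonneg x ⟨hx.1.le, by linarith [hx.2]⟩)]
    exact hle1 x ⟨hx.1.le, hx.2⟩
  -- integrability of g2 on [r/2, r] and f ≤ g2 there
  have hintu : IntervalIntegrable (fun u : ℝ => u ^ (-α)) volume 0 (r/2) :=
    intervalIntegral.intervalIntegrable_rpow' (by linarith)
  have hintg2 : IntervalIntegrable g2 volume (r/2) r := by
    refine IntervalIntegrable.const_mul ?_ _
    have h := hintu.comp_sub_left r
    rw [sub_zero, show r - r/2 = r/2 by ring] at h
    exact h.symm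
  have hle2 : ∀ s ∈ Icc (r/2) r, f s ≤ g2 s := by
    intro s hs
    have hs0 : 0 < s := lt_of_lt_of_le hr2 hs.1
    have h1 : Real.exp (-β*s) ≤ Real.exp (-β*(r/2)) := by
      apply Real.exp_le_exp.2; nlinarith [hs.1]
    have h2 : s^(-α) ≤ (r/2)^(-α) :=
      Real.rpow_le_rpow_of_nonpos hr2 hs.1 (by linarith)
    have h3 : (0:ℝ) ≤ (r - s)^(-α) := Real.rpow_nonneg (by linarith [hs.2]) _
    calc f s = (Real.exp (-β*s) * s^(-α)) * (r - s)^(-α) := by rw [hf]; ring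
      _ ≤ (Real.exp (-β*(r/2)) * (r/2)^(-α)) * (r - s)^(-α) := by
          apply mul_le_mul_of_nonneg_right _ h3
          exact mul_le_mul h1 h2 (Real.rpow_nonneg hs0.le _) (Real.exp_pos _).le
      _ = g2 s := rfl
  have hintf2 : IntervalIntegrable f volume (r/2) r := by
    refine hintg2.mono_fun' hfmeas.aestronglyMeasurable.restrict ?_
    rw [uIoc_of_le (by linarith : r/2 ≤ r)]
    filter_upwards [ae_restrict_mem measurableSet_Ioc] with x hx
    rw [Real.norm_eq_abs, abs_of_nonneg (hfnonneg x ⟨by linarith [hx.1], hx.2⟩)]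
    exact hle2 x ⟨hx.1.le, hx.2⟩
  -- split the integral
  have hsplit : (∫ s in (0:ℝ)..r, f s) = (∫ s in (0:ℝ)..(r/2), f s) + ∫ s in (r/2)..r, f s :=
    (intervalIntegral.integral_add_adjacent_intervals hintf1 hintf2).symm
  -- bound the first piece
  have hb1 : (∫ s in (0:ℝ)..(r/2), f s) ≤ (r/2)^(-α) * A := by
    calc (∫ s in (0:ℝ)..(r/2), f s) ≤ ∫ s in (0:ℝ)..(r/2), g1 s :=
          intervalIntegral.integral_mono_on hr2.le hintf1 hintg1 hle1
      _ = (r/2)^(-α) * ∫ s in (0:ℝ)..(r/2), Real.exp (-β*s) * s^(-α) := by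
          rw [hg1, intervalIntegral.integral_const_mul]
      _ ≤ (r/2)^(-α) * A := by
          apply mul_le_mul_of_nonneg_left _ (Real.rpow_nonneg hr2.le _)
          rw [intervalIntegral.integral_of_le hr2.le, ← hg0val]
          apply setIntegral_mono_set hg0
          · filter_upwards [ae_restrict_mem measurableSet_Ioi] with x hx
            exact mul_nonneg (Real.exp_pos _).le (Real.rpow_nonneg (le_of_lt hx) _)
          · exact HasSubset.Subset.eventuallyLE Ioc_subset_Ioi_self
  -- compute the integral of (r-s)^(-α) over [r/2, r]
  have hcomp : (∫ s in (r/2)..r, (r - s)^(-α)) = (r/2)^(1-α) / (1-α) := by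
    have h := intervalIntegral.integral_comp_sub_left (a := r/2) (b := r)
      (fun u : ℝ => u ^ (-α)) r
    rw [h, sub_self, show r - r/2 = r/2 by ring]
    rw [integral_rpow (Or.inl (by linarith))]
    rw [Real.zero_rpow (by linarith : -α + 1 ≠ 0)]
    rw [show -α + 1 = 1 - α by ring]
    ring
  -- the key elementary bound
  have hkey : Real.exp (-β*(r/2)) * (r/2)^(1-α) ≤ 1 + 1/β := by
    set t := r/2 with ht
    have hexple : Real.exp (-β*t) ≤ 1 := by
      rw [Real.exp_le_one_iff]; nlinarith
    have htpow : t^(1-α) ≤ 1 + t := by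
      rcases le_or_gt t 1 with h | h
      · have : t^(1-α) ≤ 1 := Real.rpow_le_one hr2.le h h1α.le
        linarith
      · have : t^(1-α) ≤ t^(1:ℝ) := Real.rpow_le_rpow_of_exponent_le h.le (by linarith)
        rw [Real.rpow_one] at this
        linarith
    have hte : Real.exp (-β*t) * t ≤ 1/β := by
      rw [neg_mul, Real.exp_neg, mul_comm, ← div_eq_mul_inv,
        div_le_div_iff₀ (Real.exp_pos _) hβ]
      have := Real.add_one_le_exp (β*t)
      nlinarith [Real.exp_pos (β*t)]
    calc Real.exp (-β*t) * t^(1-α) ≤ Real.exp (-β*t) * (1 + t) :=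
          mul_le_mul_of_nonneg_left htpow (Real.exp_pos _).le
      _ = Real.exp (-β*t) + Real.exp (-β*t) * t := by ring
      _ ≤ 1 + 1/β := add_le_add hexple hte
  -- bound the second piece
  have hb2 : (∫ s in (r/2)..r, f s) ≤ (r/2)^(-α) * B := by
    calc (∫ s in (r/2)..r, f s) ≤ ∫ s in (r/2)..r, g2 s :=
          intervalIntegral.integral_mono_on (by linarith) hintf2 hintg2 hle2
      _ = C2 * ((r/2)^(1-α) / (1-α)) := by
          rw [hg2, intervalIntegral.integral_const_mul, hcomp]
      _ = (r/2)^(-α) * ((Real.exp (-β*(r/2)) * (r/2)^(1-α)) / (1-α)) := by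
          rw [hC2]; ring
      _ ≤ (r/2)^(-α) * B := by
          apply mul_le_mul_of_nonneg_left _ (Real.rpow_nonneg hr2.le _)
          rw [hB]
          gcongr
  have hhalf : (r/2)^(-α) = 2^α * r^(-α) := by
    rw [Real.div_rpow hr.le (by norm_num : (0:ℝ) ≤ 2),
      Real.rpow_neg (by norm_num : (0:ℝ) ≤ 2)]
    field_simp
  rw [hsplit]
  calc (∫ s in (0:ℝ)..(r/2), f s) + ∫ s in (r/2)..r, f s
      ≤ (r/2)^(-α)*A + (r/2)^(-α)*B := add_le_add hb1 hb2
    _ = (2:ℝ)^α * (A + B) * r^(-α) := by rw [hhalf]; ring
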